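/- arXiv:2402.12019 — 2 statements merged into one kernel-verified Lean document; each statement's English description precedes it below -/
import Mathlib

section
/- In a 2-robot instance on a path graph where all m tasks have the same duration d, the minimum time span of a task-completing collision-free pair of schedules equals min over q ∈ [0, m] of max(W_L(q), W_R(q)), where W_L(q) is the single-robot optimal completion time for tasks t_1,...,t_q from sv_L and W_R(q) is the single-robot optimal completion time for tasks t_{q+1},...,t_m from sv_R. -/
/-- A valid (task-completing, collision-free) set of schedules for `k` robots on
the path graph with vertices `1, …, n`: `w r` is robot `r`'s walk, `L r` its
time span, `sv r` its starting vertex, and `f j` the robot assigned task `j`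
(tasks `j < m` at vertex `pos j` with duration `d j`). -/
def PathValid (n k m : ℕ) (sv pos d : ℕ → ℕ) (w : ℕ → ℕ → ℕ)
    (L f : ℕ → ℕ) : Prop :=
  (∀ r < k, w r 0 = sv r) ∧
  (∀ r < k, ∀ t, w r (t + 1) = w r t ∨ w r (t + 1) = w r t + 1 ∨
      w r t = w r (t + 1) + 1) ∧
  (∀ r < k, ∀ t, 1 ≤ w r t ∧ w r t ≤ n) ∧
  (∀ r < k, ∀ t, L r ≤ t → w r t = w r (L r)) ∧
  (∀ (t : ℕ), ∀ r < k, ∀ r' < k, r ≠ r' →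
      w r t ≠ w r' t ∧ ¬(w r (t + 1) = w r' t ∧ w r' (t + 1) = w r t)) ∧
  (∀ j < m, f j < k) ∧
  (∀ j < m, ∃ a, a + d j ≤ L (f j) ∧ ∀ u ≤ d j, w (f j) (a + u) = pos j)

/-- The single-robot optimal completion time for the (contiguous) tasks
`a, a+1, …, b-1` at positions `pos` with durations `d`, starting from vertex
`s`: `min(dist to leftmost, dist to rightmost) + (rightmost − leftmost) + Σ d`,
where leftmost/rightmost are extended to include the start vertex; `0` for an
empty block. -/
def optTime (pos d : ℕ → ℕ) (s a b : ℕ) : ℕ :=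
  if b ≤ a then 0
  else
    min (s - min (pos a) s) (max (pos (b - 1)) s - s) +
      (max (pos (b - 1)) s - min (pos a) s) +
      ∑ j ∈ Finset.Ico a b, d j


namespace TwoRobotAux

/-- Greatest `x ≤ N` with `arr x ≤ t`. -/
def sw (arr : ℕ → ℕ) (N t : ℕ) : ℕ := Nat.findGreatest (fun x => arr x ≤ t) N

section Sweep
variable {arr : ℕ → ℕ} {N : ℕ}

lemma sw_le (t : ℕ) : sw arr N t ≤ N := Nat.findGreatest_le N

lemma arr_sw_le (h0 : arr 0 = 0) (t : ℕ) : arr (sw arr N t) ≤ t :=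
  Nat.findGreatest_spec (P := fun x => arr x ≤ t) (Nat.zero_le N) (by simp [h0])

lemma le_sw {x t : ℕ} (hx : x ≤ N) (h : arr x ≤ t) : x ≤ sw arr N t :=
  Nat.le_findGreatest hx h

lemma sw_mono (h0 : arr 0 = 0) {t t' : ℕ} (h : t ≤ t') : sw arr N t ≤ sw arr N t' :=
  le_sw (sw_le t) (le_trans (arr_sw_le h0 t) h)

lemma arr_mono (hstep : ∀ x, arr x + 1 ≤ arr (x + 1)) {x y : ℕ} (h : x ≤ y) :
    arr x + (y - x) ≤ arr y := by
  induction y with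
  | zero => simp_all
  | succ y ih =>
    rcases Nat.lt_or_ge x (y+1) with h' | h'
    · have hxy : x ≤ y := Nat.lt_succ_iff.mp h'
      have := ih hxy
      have := hstep y
      omega
    · have : x = y + 1 := le_antisymm h h'
      simp [this]

lemma sw_step (h0 : arr 0 = 0) (hstep : ∀ x, arr x + 1 ≤ arr (x + 1)) (t : ℕ) :
    sw arr N (t + 1) ≤ sw arr N t + 1 := by
  by_contra hcon
  push_neg at hcon
  have h2 : sw arr N t + 2 ≤ sw arr N (t+1) := hcon
  have hm : arr (sw arr N t + 1) + 1 ≤ arr (sw arr N (t+1)) := by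
    have := arr_mono hstep (le_trans (by omega) h2 : sw arr N t + 1 ≤ sw arr N (t+1))
    omega
  have hle : arr (sw arr N t + 1) ≤ t := by
    have := arr_sw_le (arr := arr) (N := N) h0 (t+1)
    omega
  have : sw arr N t + 1 ≤ sw arr N t :=
    le_sw (le_trans (by omega) (sw_le (arr := arr) (t+1))) hle
  omega

lemma sw_eq_of (h0 : arr 0 = 0) (hstep : ∀ x, arr x + 1 ≤ arr (x + 1))
    {x t : ℕ} (hx : x ≤ N) (h1 : arr x ≤ t) (h2 : x = N ∨ t < arr (x + 1)) :
    sw arr N t = x := by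
  refine le_antisymm ?_ (le_sw hx h1)
  by_contra hcon
  push_neg at hcon
  rcases h2 with rfl | h2
  · exact absurd (sw_le (arr := arr) (N := x) t) (by omega)
  · have : arr (x + 1) ≤ arr (sw arr N t) := by
      have := arr_mono hstep (show x + 1 ≤ sw arr N t from hcon)
      omega
    have := arr_sw_le (arr := arr) (N := N) h0 t
    omega

lemma sw_big (h : arr N ≤ t) : sw arr N t = N :=
  le_antisymm (sw_le t) (le_sw le_rfl h)

end Sweep
end TwoRobotAux
namespace TwoRobotAux2
open TwoRobotAux Finset

lemma sw_zero {arr : ℕ → ℕ} {N : ℕ} (h0 : arr 0 = 0) (hstep : ∀ x, arr x + 1 ≤ arr (x + 1)) :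
    sw arr N 0 = 0 := by
  by_contra h
  have h1 : 1 ≤ sw arr N 0 := Nat.pos_of_ne_zero h
  have h2 := arr_mono hstep h1
  have h3 := arr_sw_le (arr := arr) (N := N) h0 0
  have h4 : arr 0 + 1 ≤ arr 1 := hstep 0
  omega

section WalkUp
variable {pos : ℕ → ℕ} {δ a b s : ℕ}

/-- arrival-time function for the upward sweep -/
def arrU (pos : ℕ → ℕ) (δ a b A : ℕ) (x : ℕ) : ℕ :=
  x + δ * (((Finset.Ico a b).filter (fun j => pos j < A + x)).card)

-- abbreviations
local notation "A" => min (pos a) s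
local notation "B" => max (pos (b-1)) s
local notation "NN" => max (pos (b-1)) s - min (pos a) s

lemma posA (hm : ∀ ⦃i j : ℕ⦄, a ≤ i → i < j → j < b → pos i < pos j)
    ⦃j : ℕ⦄ (h1 : a ≤ j) (h2 : j < b) : A ≤ pos j := by
  rcases eq_or_lt_of_le h1 with rfl | h
  · exact min_le_left _ _
  · exact le_trans (min_le_left _ _) (le_of_lt (hm le_rfl h h2))

lemma posB (hm : ∀ ⦃i j : ℕ⦄, a ≤ i → i < j → j < b → pos i < pos j)
    ⦃j : ℕ⦄ (h1 : a ≤ j) (h2 : j < b) : pos j ≤ B := by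
  rcases eq_or_lt_of_le (Nat.le_sub_one_of_lt h2) with h | h
  · rw [h]; exact le_max_left _ _
  · exact le_trans (le_of_lt (hm h1 h (by omega))) (le_max_left _ _)

lemma arrU0 (hm : ∀ ⦃i j : ℕ⦄, a ≤ i → i < j → j < b → pos i < pos j) :
    arrU pos δ a b A 0 = 0 := by
  have h : ((Finset.Ico a b).filter (fun j => pos j < A + 0)).card = 0 := by
    rw [Finset.card_eq_zero, Finset.filter_eq_empty_iff]
    intro j hj
    simp only [Finset.mem_Ico] at hj
    have := posA (s := s) hm hj.1 hj.2
    omega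
  rw [arrU, h]; ring

lemma arrUstep (x : ℕ) : arrU pos δ a b A x + 1 ≤ arrU pos δ a b A (x + 1) := by
  have h : (((Finset.Ico a b).filter (fun j => pos j < A + x)).card) ≤
      (((Finset.Ico a b).filter (fun j => pos j < A + (x+1))).card) := by
    apply Finset.card_le_card
    intro j hj
    simp only [Finset.mem_filter] at hj ⊢
    exact ⟨hj.1, by omega⟩
  simp only [arrU]
  have := Nat.mul_le_mul_left δ h
  omega

lemma arrU_le (x : ℕ) : arrU pos δ a b A x ≤ x + δ * (b - a) := by
  have h : (((Finset.Ico a b).filter (fun j => pos j < A + x)).card) ≤ b - a := by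
    calc _ ≤ (Finset.Ico a b).card := Finset.card_le_card (Finset.filter_subset _ _)
    _ = b - a := Nat.card_Ico a b
  simp only [arrU]
  have := Nat.mul_le_mul_left δ h
  omega

lemma arrU_task_cnt (hm : ∀ ⦃i j : ℕ⦄, a ≤ i → i < j → j < b → pos i < pos j)
    ⦃j : ℕ⦄ (h1 : a ≤ j) (h2 : j < b) :
    arrU pos δ a b A (pos j - A) + δ ≤ NN + δ * (b - a) := by
  have hAj := posA (s := s) hm h1 h2
  have hBj := posB (s := s) hm h1 h2
  have hsub : ((Finset.Ico a b).filter (fun j' => pos j' < A + (pos j - A))) ⊆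
      (Finset.Ico a b).erase j := by
    intro j' hj'
    simp only [Finset.mem_filter, Finset.mem_Ico] at hj'
    have hx : A + (pos j - A) = pos j := by omega
    rw [hx] at hj'
    refine Finset.mem_erase.mpr ⟨?_, by simp only [Finset.mem_Ico]; omega⟩
    rintro rfl; omega
  have hcard : ((Finset.Ico a b).filter (fun j' => pos j' < A + (pos j - A))).card ≤ b - a - 1 := by
    calc _ ≤ ((Finset.Ico a b).erase j).card := Finset.card_le_card hsub
    _ = b - a - 1 := by
        rw [Finset.card_erase_of_mem (by simp only [Finset.mem_Ico]; omega), Nat.card_Ico]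
  simp only [arrU]
  have h3 := Nat.mul_le_mul_left δ hcard
  have hd : δ * (b - a - 1) + δ ≤ δ * (b - a) := by
    have h4 : δ * (b - a - 1) + δ * 1 = δ * (b - a - 1 + 1) := by ring
    rw [Nat.mul_one] at h4
    rw [h4]
    exact Nat.mul_le_mul_left δ (by omega)
  omega

lemma arrU_succ_task (hm : ∀ ⦃i j : ℕ⦄, a ≤ i → i < j → j < b → pos i < pos j)
    ⦃j : ℕ⦄ (h1 : a ≤ j) (h2 : j < b) :
    arrU pos δ a b A (pos j - A + 1) = arrU pos δ a b A (pos j - A) + 1 + δ := by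
  have hAj := posA (s := s) hm h1 h2
  have hAx : A + (pos j - A) = pos j := by omega
  have hset : ((Finset.Ico a b).filter (fun j' => pos j' < A + (pos j - A + 1))) =
      insert j ((Finset.Ico a b).filter (fun j' => pos j' < A + (pos j - A))) := by
    ext j'
    simp only [Finset.mem_filter, Finset.mem_Ico, Finset.mem_insert]
    constructor
    · rintro ⟨⟨hj1, hj2⟩, hj3⟩
      rcases Nat.lt_or_ge j' j with h | h
      · right; exact ⟨⟨hj1, hj2⟩, by have := hm hj1 h h2; omega⟩
      · rcases eq_or_lt_of_le h with rfl | h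
        · left; rfl
        · exact absurd (hm h1 h hj2) (by omega)
    · rintro (rfl | ⟨⟨hj1, hj2⟩, hj3⟩) <;> omega
  have hnot : j ∉ ((Finset.Ico a b).filter (fun j' => pos j' < A + (pos j - A))) := by
    simp only [Finset.mem_filter, Finset.mem_Ico, not_and]
    intro _; omega
  simp only [arrU, hset, Finset.card_insert_of_notMem hnot]
  ring

/-- walk: descend from `s` to `A`, then sweep up to `B` pausing `δ` at tasks -/
def wU (pos : ℕ → ℕ) (δ a b s : ℕ) : ℕ → ℕ := fun t =>
  if t < s - min (pos a) s then s - t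
  else min (pos a) s + sw (arrU pos δ a b (min (pos a) s))
    (max (pos (b-1)) s - min (pos a) s) (t - (s - min (pos a) s))

variable (hm : ∀ ⦃i j : ℕ⦄, a ≤ i → i < j → j < b → pos i < pos j)

lemma wU_zero (hm : ∀ ⦃i j : ℕ⦄, a ≤ i → i < j → j < b → pos i < pos j) :
    wU pos δ a b s 0 = s := by
  unfold wU
  split
  · simp
  · rename_i h
    have hA : A ≤ s := min_le_right _ _
    have h2 : s - A = 0 := by omega
    rw [h2, Nat.sub_zero, sw_zero (arrU0 (δ := δ) hm) (arrUstep)]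
    omega

lemma wU_mem (hm : ∀ ⦃i j : ℕ⦄, a ≤ i → i < j → j < b → pos i < pos j) (t : ℕ) :
    A ≤ wU pos δ a b s t ∧ wU pos δ a b s t ≤ B := by
  have hA : A ≤ s := min_le_right _ _
  have hB : s ≤ B := le_max_right _ _
  unfold wU
  split
  · constructor <;> omega
  · have h1 := sw_le (arr := arrU pos δ a b A) (N := NN) (t - (s - A))
    constructor <;> omega

lemma wU_step (hm : ∀ ⦃i j : ℕ⦄, a ≤ i → i < j → j < b → pos i < pos j) (t : ℕ) :
    wU pos δ a b s (t+1) = wU pos δ a b s t ∨ wU pos δ a b s (t+1) = wU pos δ a b s t + 1 ∨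
      wU pos δ a b s t = wU pos δ a b s (t+1) + 1 := by
  have hA : A ≤ s := min_le_right _ _
  unfold wU
  rcases Nat.lt_or_ge (t+1) (s - A) with h | h
  · rw [if_pos h, if_pos (by omega)]
    right; right; omega
  · rw [if_neg (by omega)]
    rcases Nat.lt_or_ge t (s - A) with h' | h'
    · rw [if_pos h']
      have ht : t + 1 = s - A := by omega
      rw [ht, Nat.sub_self, sw_zero (arrU0 (δ := δ) hm) (arrUstep)]
      right; right; omega
    · rw [if_neg (by omega)]
      have e1 : t + 1 - (s - A) = (t - (s - A)) + 1 := by omega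
      rw [e1]
      have h1 := sw_step (N := NN) (arrU0 (δ := δ) (s := s) hm) (arrUstep) (t - (s - A))
      have h2 := sw_mono (N := NN) (arrU0 (δ := δ) (s := s) hm)
        (show t - (s - A) ≤ t - (s - A) + 1 by omega)
      omega

lemma wU_const (hm : ∀ ⦃i j : ℕ⦄, a ≤ i → i < j → j < b → pos i < pos j) (t : ℕ)
    (ht : (s - A) + NN + δ * (b - a) ≤ t) : wU pos δ a b s t = B := by
  have hA : A ≤ s := min_le_right _ _
  have hB : s ≤ B := le_max_right _ _
  unfold wU
  rw [if_neg (by omega)]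
  have : arrU pos δ a b A NN ≤ t - (s - A) := le_trans (arrU_le _) (by omega)
  rw [sw_big this]
  omega

lemma wU_task (hm : ∀ ⦃i j : ℕ⦄, a ≤ i → i < j → j < b → pos i < pos j)
    ⦃j : ℕ⦄ (h1 : a ≤ j) (h2 : j < b) :
    ∃ st, st + δ ≤ (s - A) + NN + δ * (b - a) ∧
      ∀ u ≤ δ, wU pos δ a b s (st + u) = pos j := by
  have hA : A ≤ s := min_le_right _ _
  have hAj := posA (s := s) hm h1 h2
  have hBj := posB (s := s) hm h1 h2
  have hB : s ≤ B := le_max_right _ _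
  refine ⟨(s - A) + arrU pos δ a b A (pos j - A), ?_, ?_⟩
  · have := arrU_task_cnt (δ := δ) (s := s) hm h1 h2
    omega
  · intro u hu
    unfold wU
    rw [if_neg (by omega)]
    have e1 : (s - A) + arrU pos δ a b A (pos j - A) + u - (s - A)
        = arrU pos δ a b A (pos j - A) + u := by omega
    rw [e1]
    have hxN : pos j - A ≤ NN := by omega
    have hsw : sw (arrU pos δ a b A) NN (arrU pos δ a b A (pos j - A) + u) = pos j - A := by
      apply sw_eq_of (arrU0 (δ := δ) hm) (arrUstep) hxN (by omega)
      rcases eq_or_lt_of_le hxN with h | h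
      · left; exact h
      · right
        rw [arrU_succ_task (s := s) hm h1 h2]
        omega
    rw [hsw]
    omega

lemma wU_lb (hab : a < b) (hm : ∀ ⦃i j : ℕ⦄, a ≤ i → i < j → j < b → pos i < pos j)
    (hAs : min (pos a) s = s) (t : ℕ) : min (s + t) (pos a) ≤ wU pos δ a b s t := by
  have hBa : pos a ≤ B := posB (s := s) hm le_rfl hab
  have hsa : s ≤ pos a := by omega
  unfold wU
  rw [hAs, Nat.sub_self, Nat.sub_zero, if_neg (by omega)]
  have hx : min t (pos a - s) ≤ B - s := by omega
  have harr : arrU pos δ a b s (min t (pos a - s)) ≤ t := by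
    have hc : ((Finset.Ico a b).filter (fun j => pos j < s + min t (pos a - s))).card = 0 := by
      rw [Finset.card_eq_zero, Finset.filter_eq_empty_iff]
      intro j hj
      simp only [Finset.mem_Ico] at hj
      have h4 : pos a ≤ pos j := by
        rcases eq_or_lt_of_le hj.1 with rfl | h
        · exact le_rfl
        · exact le_of_lt (hm le_rfl h hj.2)
      omega
    rw [arrU, hc]
    omega
  have h5 := le_sw (arr := arrU pos δ a b s) (t := t) hx harr
  omega

/-- arrival-time function for the downward sweep -/
def arrD (pos : ℕ → ℕ) (δ a b Bv : ℕ) (x : ℕ) : ℕ :=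
  x + δ * (((Finset.Ico a b).filter (fun j => Bv - x < pos j)).card)

/-- walk: ascend from `s` to `B`, then sweep down to `A` pausing `δ` at tasks -/
def wD (pos : ℕ → ℕ) (δ a b s : ℕ) : ℕ → ℕ := fun t =>
  if t < max (pos (b-1)) s - s then s + t
  else max (pos (b-1)) s - sw (arrD pos δ a b (max (pos (b-1)) s))
    (max (pos (b-1)) s - min (pos a) s) (t - (max (pos (b-1)) s - s))

lemma arrD0 (hm : ∀ ⦃i j : ℕ⦄, a ≤ i → i < j → j < b → pos i < pos j) :
    arrD pos δ a b B 0 = 0 := by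
  have h : ((Finset.Ico a b).filter (fun j => B - 0 < pos j)).card = 0 := by
    rw [Finset.card_eq_zero, Finset.filter_eq_empty_iff]
    intro j hj
    simp only [Finset.mem_Ico] at hj
    have := posB (s := s) hm hj.1 hj.2
    omega
  rw [arrD, h]; ring

lemma arrDstep (x : ℕ) : arrD pos δ a b B x + 1 ≤ arrD pos δ a b B (x + 1) := by
  have h : (((Finset.Ico a b).filter (fun j => B - x < pos j)).card) ≤
      (((Finset.Ico a b).filter (fun j => B - (x+1) < pos j)).card) := by
    apply Finset.card_le_card
    intro j hj
    simp only [Finset.mem_filter] at hj ⊢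
    exact ⟨hj.1, by omega⟩
  simp only [arrD]
  have := Nat.mul_le_mul_left δ h
  omega

lemma arrD_le (x : ℕ) : arrD pos δ a b B x ≤ x + δ * (b - a) := by
  have h : (((Finset.Ico a b).filter (fun j => B - x < pos j)).card) ≤ b - a := by
    calc _ ≤ (Finset.Ico a b).card := Finset.card_le_card (Finset.filter_subset _ _)
    _ = b - a := Nat.card_Ico a b
  simp only [arrD]
  have := Nat.mul_le_mul_left δ h
  omega

lemma arrD_task_cnt (hm : ∀ ⦃i j : ℕ⦄, a ≤ i → i < j → j < b → pos i < pos j)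
    ⦃j : ℕ⦄ (h1 : a ≤ j) (h2 : j < b) :
    arrD pos δ a b B (B - pos j) + δ ≤ NN + δ * (b - a) := by
  have hAj := posA (s := s) hm h1 h2
  have hBj := posB (s := s) hm h1 h2
  have hA : A ≤ s := min_le_right _ _
  have hsub : ((Finset.Ico a b).filter (fun j' => B - (B - pos j) < pos j')) ⊆
      (Finset.Ico a b).erase j := by
    intro j' hj'
    simp only [Finset.mem_filter, Finset.mem_Ico] at hj'
    have hx : B - (B - pos j) = pos j := by omega
    rw [hx] at hj'
    refine Finset.mem_erase.mpr ⟨?_, by simp only [Finset.mem_Ico]; omega⟩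
    rintro rfl; omega
  have hcard : ((Finset.Ico a b).filter (fun j' => B - (B - pos j) < pos j')).card ≤ b - a - 1 := by
    calc _ ≤ ((Finset.Ico a b).erase j).card := Finset.card_le_card hsub
    _ = b - a - 1 := by
        rw [Finset.card_erase_of_mem (by simp only [Finset.mem_Ico]; omega), Nat.card_Ico]
  simp only [arrD]
  have h3 := Nat.mul_le_mul_left δ hcard
  have hd : δ * (b - a - 1) + δ ≤ δ * (b - a) := by
    have h4 : δ * (b - a - 1) + δ * 1 = δ * (b - a - 1 + 1) := by ring
    rw [Nat.mul_one] at h4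
    rw [h4]
    exact Nat.mul_le_mul_left δ (by omega)
  omega

lemma arrD_succ_task (hm : ∀ ⦃i j : ℕ⦄, a ≤ i → i < j → j < b → pos i < pos j)
    (hpos1 : ∀ ⦃j : ℕ⦄, a ≤ j → j < b → 1 ≤ pos j)
    ⦃j : ℕ⦄ (h1 : a ≤ j) (h2 : j < b) :
    arrD pos δ a b B (B - pos j + 1) = arrD pos δ a b B (B - pos j) + 1 + δ := by
  have hBj := posB (s := s) hm h1 h2
  have hp1 := hpos1 h1 h2
  have hx1 : B - (B - pos j + 1) = pos j - 1 := by omega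
  have hx2 : B - (B - pos j) = pos j := by omega
  have hset : ((Finset.Ico a b).filter (fun j' => B - (B - pos j + 1) < pos j')) =
      insert j ((Finset.Ico a b).filter (fun j' => B - (B - pos j) < pos j')) := by
    ext j'
    simp only [Finset.mem_filter, Finset.mem_Ico, Finset.mem_insert, hx1, hx2]
    constructor
    · rintro ⟨⟨hj1, hj2⟩, hj3⟩
      rcases Nat.lt_or_ge j j' with h | h
      · right; exact ⟨⟨hj1, hj2⟩, hm h1 h hj2⟩
      · rcases eq_or_lt_of_le h with rfl | h
        · left; rfl
        · exact absurd (hm hj1 h h2) (by omega)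
    · rintro (rfl | ⟨⟨hj1, hj2⟩, hj3⟩) <;> omega
  have hnot : j ∉ ((Finset.Ico a b).filter (fun j' => B - (B - pos j) < pos j')) := by
    simp only [Finset.mem_filter, Finset.mem_Ico, hx2, not_and]
    intro _; omega
  simp only [arrD, hset, Finset.card_insert_of_notMem hnot]
  ring

lemma wD_zero (hm : ∀ ⦃i j : ℕ⦄, a ≤ i → i < j → j < b → pos i < pos j) :
    wD pos δ a b s 0 = s := by
  unfold wD
  split
  · simp
  · rename_i h
    have hB : s ≤ B := le_max_right _ _
    have h2 : B - s = 0 := by omega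
    rw [h2, Nat.sub_zero, sw_zero (arrD0 (δ := δ) (s := s) hm) (arrDstep)]
    omega

lemma wD_mem (hm : ∀ ⦃i j : ℕ⦄, a ≤ i → i < j → j < b → pos i < pos j) (t : ℕ) :
    A ≤ wD pos δ a b s t ∧ wD pos δ a b s t ≤ B := by
  have hA : A ≤ s := min_le_right _ _
  have hB : s ≤ B := le_max_right _ _
  unfold wD
  split
  · constructor <;> omega
  · have h1 := sw_le (arr := arrD pos δ a b B) (N := NN) (t - (B - s))
    constructor <;> omega

lemma wD_step (hm : ∀ ⦃i j : ℕ⦄, a ≤ i → i < j → j < b → pos i < pos j) (t : ℕ) :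
    wD pos δ a b s (t+1) = wD pos δ a b s t ∨ wD pos δ a b s (t+1) = wD pos δ a b s t + 1 ∨
      wD pos δ a b s t = wD pos δ a b s (t+1) + 1 := by
  have hB : s ≤ B := le_max_right _ _
  unfold wD
  rcases Nat.lt_or_ge (t+1) (B - s) with h | h
  · rw [if_pos h, if_pos (by omega)]
    right; left; omega
  · rw [if_neg (by omega)]
    rcases Nat.lt_or_ge t (B - s) with h' | h'
    · rw [if_pos h']
      have ht : t + 1 = B - s := by omega
      rw [ht, Nat.sub_self, sw_zero (arrD0 (δ := δ) (s := s) hm) (arrDstep)]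
      right; left; omega
    · rw [if_neg (by omega)]
      have e1 : t + 1 - (B - s) = (t - (B - s)) + 1 := by omega
      rw [e1]
      have h1 := sw_step (N := NN) (arrD0 (δ := δ) (s := s) hm) (arrDstep) (t - (B - s))
      have h2 := sw_mono (N := NN) (arrD0 (δ := δ) (s := s) hm)
        (show t - (B - s) ≤ t - (B - s) + 1 by omega)
      have h3 := sw_le (arr := arrD pos δ a b B) (N := NN) (t - (B - s))
      have h4 := sw_le (arr := arrD pos δ a b B) (N := NN) (t - (B - s) + 1)
      have hA : A ≤ s := min_le_right _ _
      omega

lemma wD_const (hm : ∀ ⦃i j : ℕ⦄, a ≤ i → i < j → j < b → pos i < pos j) (t : ℕ)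
    (ht : (B - s) + NN + δ * (b - a) ≤ t) : wD pos δ a b s t = A := by
  have hA : A ≤ s := min_le_right _ _
  have hB : s ≤ B := le_max_right _ _
  unfold wD
  rw [if_neg (by omega)]
  have : arrD pos δ a b B NN ≤ t - (B - s) := le_trans (arrD_le _) (by omega)
  rw [sw_big this]
  omega

lemma wD_task (hm : ∀ ⦃i j : ℕ⦄, a ≤ i → i < j → j < b → pos i < pos j)
    (hpos1 : ∀ ⦃j : ℕ⦄, a ≤ j → j < b → 1 ≤ pos j)
    ⦃j : ℕ⦄ (h1 : a ≤ j) (h2 : j < b) :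
    ∃ st, st + δ ≤ (B - s) + NN + δ * (b - a) ∧
      ∀ u ≤ δ, wD pos δ a b s (st + u) = pos j := by
  have hA : A ≤ s := min_le_right _ _
  have hAj := posA (s := s) hm h1 h2
  have hBj := posB (s := s) hm h1 h2
  have hB : s ≤ B := le_max_right _ _
  refine ⟨(B - s) + arrD pos δ a b B (B - pos j), ?_, ?_⟩
  · have := arrD_task_cnt (δ := δ) (s := s) hm h1 h2
    omega
  · intro u hu
    unfold wD
    rw [if_neg (by omega)]
    have e1 : (B - s) + arrD pos δ a b B (B - pos j) + u - (B - s)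
        = arrD pos δ a b B (B - pos j) + u := by omega
    rw [e1]
    have hxN : B - pos j ≤ NN := by omega
    have hsw : sw (arrD pos δ a b B) NN (arrD pos δ a b B (B - pos j) + u) = B - pos j := by
      apply sw_eq_of (arrD0 (δ := δ) (s := s) hm) (arrDstep) hxN (by omega)
      rcases eq_or_lt_of_le hxN with h | h
      · left; exact h
      · right
        rw [arrD_succ_task (s := s) hm hpos1 h1 h2]
        omega
    rw [hsw]
    omega

lemma wD_ub (hab : a < b) (hm : ∀ ⦃i j : ℕ⦄, a ≤ i → i < j → j < b → pos i < pos j)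
    (hBs : max (pos (b-1)) s = s) (t : ℕ) : wD pos δ a b s t ≤ max (s - t) (pos (b-1)) := by
  have hbs : pos (b-1) ≤ s := by omega
  unfold wD
  rw [hBs, Nat.sub_self, if_neg (by omega), Nat.sub_zero]
  have hx : min t (s - pos (b-1)) ≤ s - A := by
    have h1 : A ≤ s := min_le_right _ _
    have h2 : A ≤ pos (b-1) := posA (s := s) hm (by omega) (by omega)
    omega
  have harr : arrD pos δ a b s (min t (s - pos (b-1))) ≤ t := by
    have hc : ((Finset.Ico a b).filter (fun j => s - min t (s - pos (b-1)) < pos j)).card = 0 := by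
      rw [Finset.card_eq_zero, Finset.filter_eq_empty_iff]
      intro j hj
      simp only [Finset.mem_Ico] at hj
      have h4 : pos j ≤ pos (b-1) := by
        rcases eq_or_lt_of_le (Nat.le_sub_one_of_lt hj.2) with h | h
        · rw [h]
        · exact le_of_lt (hm hj.1 h (by omega))
      omega
    rw [arrD, hc]
    omega
  have h5 := le_sw (arr := arrD pos δ a b s) (t := t) hx harr
  have h6 := sw_le (arr := arrD pos δ a b s) (N := s - A) t
  omega

end WalkUp

section LowerBound

lemma speed_ub (w : ℕ → ℕ)
    (hstep : ∀ t, w (t + 1) = w t ∨ w (t + 1) = w t + 1 ∨ w t = w (t + 1) + 1) :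
    ∀ t, w t ≤ w 0 + t ∧ w 0 ≤ w t + t := by
  intro t
  induction t with
  | zero => omega
  | succ t ih => have := hstep t; omega

lemma ordered (w0 w1 : ℕ → ℕ) (h0 : w0 0 < w1 0)
    (hs0 : ∀ t, w0 (t + 1) = w0 t ∨ w0 (t + 1) = w0 t + 1 ∨ w0 t = w0 (t + 1) + 1)
    (hs1 : ∀ t, w1 (t + 1) = w1 t ∨ w1 (t + 1) = w1 t + 1 ∨ w1 t = w1 (t + 1) + 1)
    (hne : ∀ t, w0 t ≠ w1 t ∧ ¬(w0 (t+1) = w1 t ∧ w1 (t+1) = w0 t)) :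
    ∀ t, w0 t < w1 t := by
  intro t
  induction t with
  | zero => exact h0
  | succ t ih =>
    have h1 := hs0 t
    have h2 := hs1 t
    have h3 := (hne t).1
    have h4 := (hne (t+1)).1
    have h5 := (hne t).2
    by_contra hcon
    push_neg at hcon
    have : w0 (t+1) = w1 t ∧ w1 (t+1) = w0 t := by omega
    exact h5 this

lemma moves_card (w : ℕ → ℕ)
    (hstep : ∀ t, w (t + 1) = w t ∨ w (t + 1) = w t + 1 ∨ w t = w (t + 1) + 1)
    (u : ℕ) : ∀ v, u ≤ v →
    (w v - w u) + (w u - w v) ≤ ((Finset.Ico u v).filter (fun t => w (t+1) ≠ w t)).card := by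
  intro v
  induction v with
  | zero => intro h; simp_all
  | succ v ih =>
    intro h
    rcases Nat.lt_or_ge u (v+1) with h' | h'
    · have huv : u ≤ v := by omega
      have h1 := ih huv
      have h2 : Finset.Ico u (v+1) = insert v (Finset.Ico u v) := by
        rw [Nat.Ico_succ_right_eq_insert_Ico huv]
      rw [h2, Finset.filter_insert]
      have hnv : v ∉ (Finset.Ico u v).filter (fun t => w (t+1) ≠ w t) := by
        simp [Finset.mem_filter]
      have hst := hstep v
      split
      · rw [Finset.card_insert_of_notMem hnv]
        omega
      · rename_i hcon
        push_neg at hcon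
        rw [hcon]
        omega
    · have : u = v + 1 := by omega
      subst this
      simp

lemma robot_lb (w : ℕ → ℕ) (L s δ : ℕ) (p : ℕ → ℕ) (S : Finset ℕ)
    (h0 : w 0 = s)
    (hstep : ∀ t, w (t + 1) = w t ∨ w (t + 1) = w t + 1 ∨ w t = w (t + 1) + 1)
    (hinj : ∀ i ∈ S, ∀ j ∈ S, p i = p j → i = j)
    (htask : ∀ j ∈ S, ∃ a, a + δ ≤ L ∧ ∀ u ≤ δ, w (a + u) = p j)
    (A B tA tB : ℕ) (hA : A ≤ s) (hB : s ≤ B) (htA : tA ≤ L) (htB : tB ≤ L)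
    (hwA : w tA ≤ A) (hwB : B ≤ w tB) :
    min (s - A) (B - s) + (B - A) + S.card * δ ≤ L := by
  choose! av hav1 hav2 using htask
  set Mv := (Finset.range L).filter (fun t => w (t+1) ≠ w t) with hMv
  set Wt := S.biUnion (fun j => Finset.Ico (av j) (av j + δ)) with hWt
  have hwval : ∀ j ∈ S, ∀ t ∈ Finset.Ico (av j) (av j + δ), w t = p j ∧ w (t+1) = p j := by
    intro j hj t ht
    simp only [Finset.mem_Ico] at ht
    have h1 : w (av j + (t - av j)) = p j := hav2 j hj _ (by omega)
    have h2 : w (av j + (t - av j + 1)) = p j := hav2 j hj _ (by omega)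
    constructor
    · rw [show t = av j + (t - av j) by omega]; exact h1
    · rw [show t + 1 = av j + (t - av j + 1) by omega]; exact h2
  have hWsub : Wt ⊆ Finset.range L := by
    intro t ht
    simp only [hWt, Finset.mem_biUnion, Finset.mem_Ico] at ht
    obtain ⟨j, hj, h1, h2⟩ := ht
    have := hav1 j hj
    simp only [Finset.mem_range]
    omega
  have hdisjMW : Disjoint Mv Wt := by
    rw [Finset.disjoint_left]
    intro t htM htW
    simp only [hWt, Finset.mem_biUnion] at htW
    obtain ⟨j, hj, hIco⟩ := htW
    have := hwval j hj t hIco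
    simp only [hMv, Finset.mem_filter] at htM
    omega
  have hWcard : Wt.card = S.card * δ := by
    rw [hWt, Finset.card_biUnion]
    · rw [Finset.sum_congr rfl (fun j _ => Nat.card_Ico _ _)]
      simp [Finset.sum_const, Nat.add_sub_cancel_left, mul_comm]
    · intro i hi j hj hij
      rw [Function.onFun, Finset.disjoint_left]
      intro t hti htj
      have h1 := hwval i hi t hti
      have h2 := hwval j hj t htj
      exact hij (hinj i hi j hj (by omega))
  have hMvcard : min (s - A) (B - s) + (B - A) ≤ Mv.card := by
    rcases le_total tA tB with h | h
    · have h1 := moves_card w hstep 0 tA (Nat.zero_le _)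
      have h2 := moves_card w hstep tA tB h
      have hsub : ((Finset.Ico 0 tA).filter (fun t => w (t+1) ≠ w t)) ∪
          ((Finset.Ico tA tB).filter (fun t => w (t+1) ≠ w t)) ⊆ Mv := by
        intro t ht
        simp only [Finset.mem_union, Finset.mem_filter, Finset.mem_Ico, hMv,
          Finset.mem_range] at ht ⊢
        omega
      have hdisj : Disjoint ((Finset.Ico 0 tA).filter (fun t => w (t+1) ≠ w t))
          ((Finset.Ico tA tB).filter (fun t => w (t+1) ≠ w t)) :=
        Finset.disjoint_filter_filter (Finset.Ico_disjoint_Ico_consecutive 0 tA tB)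
      have := Finset.card_le_card hsub
      rw [Finset.card_union_of_disjoint hdisj] at this
      omega
    · have h1 := moves_card w hstep 0 tB (Nat.zero_le _)
      have h2 := moves_card w hstep tB tA h
      have hsub : ((Finset.Ico 0 tB).filter (fun t => w (t+1) ≠ w t)) ∪
          ((Finset.Ico tB tA).filter (fun t => w (t+1) ≠ w t)) ⊆ Mv := by
        intro t ht
        simp only [Finset.mem_union, Finset.mem_filter, Finset.mem_Ico, hMv,
          Finset.mem_range] at ht ⊢
        omega
      have hdisj : Disjoint ((Finset.Ico 0 tB).filter (fun t => w (t+1) ≠ w t))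
          ((Finset.Ico tB tA).filter (fun t => w (t+1) ≠ w t)) :=
        Finset.disjoint_filter_filter (Finset.Ico_disjoint_Ico_consecutive 0 tB tA)
      have := Finset.card_le_card hsub
      rw [Finset.card_union_of_disjoint hdisj] at this
      omega
  have htotal : Mv.card + Wt.card ≤ L := by
    have hsub : Mv ∪ Wt ⊆ Finset.range L := by
      apply Finset.union_subset _ hWsub
      intro t ht
      simp only [hMv, Finset.mem_filter] at ht
      exact ht.1
    have := Finset.card_le_card hsub
    rw [Finset.card_union_of_disjoint hdisjMW] at this
    simpa using this
  omega

end LowerBound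
end TwoRobotAux2

section MainProof
open TwoRobotAux TwoRobotAux2

/-- for 2 robots on a path with `m` tasks of common duration `δ`,
the optimal time span equals
`min_{q ∈ [0,m]} max (W_L q) (W_R q)`, where `W_L q` is the single-robot
optimal completion time of tasks `t_1, …, t_q` from `svL` and `W_R q` that of
`t_{q+1}, …, t_m` from `svR`. -/
theorem two_robot_equal_duration_optimum (n m svL svR : ℕ) (pos : ℕ → ℕ)
    (δ : ℕ) (hsv : svL < svR)
    (hmono : ∀ j, j + 1 < m → pos j < pos (j + 1))
    (hposb : ∀ j < m, 1 ≤ pos j ∧ pos j ≤ n)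
    (hsvb : 1 ≤ svL ∧ svR ≤ n) :
    IsLeast {T | ∃ w L f,
        PathValid n 2 m (fun r => if r = 0 then svL else svR) pos
          (fun _ => δ) w L f ∧
        (Finset.range 2).sup L = T}
      (Finset.inf' (Finset.range (m + 1)) Finset.nonempty_range_add_one
        (fun q => max (optTime pos (fun _ => δ) svL 0 q)
          (optTime pos (fun _ => δ) svR q m))) := by
  -- strict monotonicity of pos on range m
  have hmono' : ∀ ⦃i j : ℕ⦄, i < j → j < m → pos i < pos j := by
    intro i j hij hjm
    induction j with
    | zero => omega
    | succ j ih =>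
      rcases Nat.lt_or_ge i j with h | h
      · exact lt_trans (ih h (by omega)) (hmono j (by omega))
      · have : i = j := by omega
        subst this
        exact hmono i (by omega)
  set V : ℕ → ℕ := fun q => max (optTime pos (fun _ => δ) svL 0 q)
      (optTime pos (fun _ => δ) svR q m) with hV
  set T : ℕ := Finset.inf' (Finset.range (m + 1)) Finset.nonempty_range_add_one V with hT
  have hTle : ∀ q, q ≤ m → T ≤ V q := by
    intro q hq
    exact Finset.inf'_le V (by simp only [Finset.mem_range]; omega)
  have hopt_pos : ∀ a b s : ℕ, a < b → optTime pos (fun _ => δ) s a b =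
      min (s - min (pos a) s) (max (pos (b - 1)) s - s) +
      (max (pos (b - 1)) s - min (pos a) s) + (b - a) * δ := by
    intro a b s hab
    rw [optTime, if_neg (by omega)]
    simp [Finset.sum_const, Nat.card_Ico, mul_comm]
  have hopt_zero : ∀ a b s : ℕ, b ≤ a → optTime pos (fun _ => δ) s a b = 0 := by
    intro a b s hab
    rw [optTime, if_pos hab]
  constructor
  · -- membership : construction
    obtain ⟨q1, hq1mem, hq1⟩ := Finset.exists_mem_eq_inf'
      (Finset.nonempty_range_add_one (n := m)) V
    have hq1T : V q1 = T := by rw [hT, hq1]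
    have hq1m : q1 ≤ m := by
      simp only [Finset.mem_range] at hq1mem
      omega
    -- adjust the argmin so that degenerate overlap configurations are avoided
    have hadj : ∃ q, q ≤ m ∧ V q = T ∧ (q = 0 → 0 < m → svL < pos 0) ∧
        (q = m → 0 < m → pos (m-1) < svR) := by
      rcases Nat.eq_zero_or_pos m with rfl | hm0
      · exact ⟨0, le_rfl, by rw [show (0:ℕ) = q1 by omega]; exact hq1T, by omega, by omega⟩
      by_cases hbad0 : q1 = 0 ∧ pos 0 ≤ svL
      · -- use q = 1
        have hVT : V 0 = T := by rw [← hbad0.1]; exact hq1T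
        have hV0 : V 0 = optTime pos (fun _ => δ) svR 0 m := by
          simp only [hV, hopt_zero 0 0 svL le_rfl]
          omega
        have hp0 : pos 0 < svR := by have := hbad0.2; omega
        have h1 : optTime pos (fun _ => δ) svL 0 1 ≤ optTime pos (fun _ => δ) svR 0 m := by
          rw [hopt_pos 0 1 svL (by omega), hopt_pos 0 m svR hm0]
          have e1 : (1:ℕ) - 1 = 0 := rfl
          rw [e1]
          have e2 : (1 - 0) * δ = 1 * δ := rfl
          have h3 : 1 * δ ≤ (m - 0) * δ := Nat.mul_le_mul_right δ (by omega)
          have h4 : svR ≤ max (pos (m-1)) svR := le_max_right _ _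
          have := hbad0.2
          omega
        have h2 : optTime pos (fun _ => δ) svR 1 m ≤ optTime pos (fun _ => δ) svR 0 m := by
          rcases Nat.lt_or_ge 1 m with h1m | h1m
          · rw [hopt_pos 1 m svR h1m, hopt_pos 0 m svR hm0]
            have h3 : pos 0 < pos 1 := hmono' (by omega) h1m
            have h4 : (m - 1) * δ ≤ (m - 0) * δ := Nat.mul_le_mul_right δ (by omega)
            omega
          · rw [hopt_zero 1 m svR (by omega)]
            omega
        refine ⟨1, by omega, le_antisymm (by rw [← hVT]; exact max_le (le_trans h1 (by rw [hV0])) (le_trans h2 (by rw [hV0]))) (hTle 1 (by omega)), by omega, ?_⟩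
        intro h1m _
        rw [show m - 1 = 0 by omega]
        omega
      by_cases hbadm : q1 = m ∧ svR ≤ pos (m-1)
      · -- use q = m - 1
        have hVT : V m = T := by rw [← hbadm.1]; exact hq1T
        have hVm : V m = optTime pos (fun _ => δ) svL 0 m := by
          simp only [hV, hopt_zero m m svR le_rfl]
          omega
        have hpm : svL < pos (m-1) := by have := hbadm.2; omega
        have h1 : optTime pos (fun _ => δ) svR (m-1) m ≤ optTime pos (fun _ => δ) svL 0 m := by
          rw [hopt_pos (m-1) m svR (by omega), hopt_pos 0 m svL hm0]
          have e3 : min (pos (m-1)) svR = svR := by omega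
          have e4 : max (pos (m-1)) svR = pos (m-1) := by omega
          rw [e3, e4]
          have h3 : (m - (m-1)) * δ ≤ (m - 0) * δ := Nat.mul_le_mul_right δ (by omega)
          have h4 : max (pos (m-1)) svL = pos (m-1) := by omega
          have h5 : min (pos 0) svL ≤ svL := min_le_right _ _
          rw [h4]
          omega
        have h2 : optTime pos (fun _ => δ) svL 0 (m-1) ≤ optTime pos (fun _ => δ) svL 0 m := by
          rcases Nat.lt_or_ge 0 (m-1) with h1m | h1m
          · rw [hopt_pos 0 (m-1) svL h1m, hopt_pos 0 m svL hm0]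
            have h3 : pos (m-1-1) < pos (m-1) := hmono' (by omega) (by omega)
            have h4 : (m - 1 - 0) * δ ≤ (m - 0) * δ := Nat.mul_le_mul_right δ (by omega)
            omega
          · rw [hopt_zero 0 (m-1) svL (by omega)]
            omega
        refine ⟨m - 1, by omega, le_antisymm (by rw [← hVT, hVm]; exact max_le h2 h1) (hTle (m-1) (by omega)), ?_, by omega⟩
        intro h1m _
        have := hbadm.2
        rw [← show m - 1 = 0 by omega]
        omega
      · refine ⟨q1, hq1m, hq1T, ?_, ?_⟩
        · intro h0 hm
          rcases not_and_or.mp hbad0 with h | h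
          · omega
          · omega
        · intro h0 hm
          rcases not_and_or.mp hbadm with h | h
          · omega
          · omega
    obtain ⟨q, hqm, hVq, hg0, hgm⟩ := hadj
    set WL := optTime pos (fun _ => δ) svL 0 q with hWL
    set WR := optTime pos (fun _ => δ) svR q m with hWR
    have hWLT : WL ≤ T := by rw [← hVq]; exact le_max_left _ _
    have hWRT : WR ≤ T := by rw [← hVq]; exact le_max_right _ _
    -- left robot walk bundle
    have hrobotL : ∃ wl : ℕ → ℕ,
        wl 0 = svL ∧
        (∀ t, wl (t+1) = wl t ∨ wl (t+1) = wl t + 1 ∨ wl t = wl (t+1) + 1) ∧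
        (∀ t, 1 ≤ wl t ∧ wl t ≤ n) ∧
        (∀ t, wl t ≤ (if q = 0 then svL else max (pos (q-1)) svL)) ∧
        (∀ t, WL ≤ t → wl t = wl WL) ∧
        (∀ j, j < q → ∃ st, st + δ ≤ WL ∧ ∀ u ≤ δ, wl (st + u) = pos j) ∧
        (0 < q → q < m → pos q ≤ svL → ∀ t, wl t ≤ max (svL - t) (pos (q-1))) := by
      rcases Nat.eq_zero_or_pos q with rfl | hq0
      · exact ⟨fun _ => svL, rfl, fun t => Or.inl rfl, fun t => ⟨hsvb.1, by show svL ≤ n; omega⟩,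
          fun t => by simp, fun t _ => rfl, fun j hj => absurd hj (by omega),
          fun h => absurd h (by omega)⟩
      have hm : ∀ ⦃i j : ℕ⦄, 0 ≤ i → i < j → j < q → pos i < pos j :=
        fun i j _ hij hj => hmono' hij (by omega)
      have hp0 : 1 ≤ pos 0 := (hposb 0 (by omega)).1
      have hpq1n : pos (q-1) ≤ n := (hposb (q-1) (by omega)).2
      have hWLeq : WL = min (svL - min (pos 0) svL) (max (pos (q-1)) svL - svL) +
          (max (pos (q-1)) svL - min (pos 0) svL) + q * δ := by
        rw [hWL, hopt_pos 0 q svL hq0, Nat.sub_zero]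
      have hcm : δ * (q - 0) = q * δ := by rw [Nat.sub_zero, Nat.mul_comm]
      rcases le_or_gt (svL - min (pos 0) svL) (max (pos (q-1)) svL - svL) with hdir | hdir
      · -- up walk
        have htot : (svL - min (pos 0) svL) + (max (pos (q-1)) svL - min (pos 0) svL) +
            δ * (q - 0) = WL := by
          rw [hWLeq, hcm]
          omega
        refine ⟨wU pos δ 0 q svL, wU_zero hm, wU_step hm, ?_, ?_, ?_, ?_, ?_⟩
        · intro t
          have := wU_mem (δ := δ) (s := svL) hm t
          constructor
          · have h1 : 1 ≤ min (pos 0) svL := by have := hsvb.1; omega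
            omega
          · have h2 : max (pos (q-1)) svL ≤ n := by have := hsvb; omega
            omega
        · intro t
          have := wU_mem (δ := δ) (s := svL) hm t
          rw [if_neg (by omega)]
          omega
        · intro t ht
          have h1 := wU_const (δ := δ) (s := svL) hm t (by omega)
          have h2 := wU_const (δ := δ) (s := svL) hm WL (by omega)
          rw [h1, h2]
        · intro j hj
          obtain ⟨st, h1, h2⟩ := wU_task (s := svL) hm (Nat.zero_le j) hj
          exact ⟨st, by omega, h2⟩
        · intro h1 h2 h3 t
          exfalso
          have h4 : pos 0 < pos q := hmono' (by omega) (by omega)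
          have h5 : pos (q-1) < pos q := hmono' (by omega) (by omega)
          omega
      · -- down walk
        have htot : (max (pos (q-1)) svL - svL) + (max (pos (q-1)) svL - min (pos 0) svL) +
            δ * (q - 0) = WL := by
          rw [hWLeq, hcm]
          omega
        have hpos1 : ∀ ⦃j : ℕ⦄, 0 ≤ j → j < q → 1 ≤ pos j :=
          fun j _ hj => (hposb j (by omega)).1
        refine ⟨wD pos δ 0 q svL, wD_zero hm, wD_step hm, ?_, ?_, ?_, ?_, ?_⟩
        · intro t
          have := wD_mem (δ := δ) (s := svL) hm t
          constructor
          · have h1 : 1 ≤ min (pos 0) svL := by have := hsvb.1; omega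
            omega
          · have h2 : max (pos (q-1)) svL ≤ n := by have := hsvb; omega
            omega
        · intro t
          have := wD_mem (δ := δ) (s := svL) hm t
          rw [if_neg (by omega)]
          omega
        · intro t ht
          have h1 := wD_const (δ := δ) (s := svL) hm t (by omega)
          have h2 := wD_const (δ := δ) (s := svL) hm WL (by omega)
          rw [h1, h2]
        · intro j hj
          obtain ⟨st, h1, h2⟩ := wD_task (s := svL) hm hpos1 (Nat.zero_le j) hj
          exact ⟨st, by omega, h2⟩
        · intro h1 h2 h3 t
          have h5 : pos (q-1) < pos q := hmono' (by omega) (by omega)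
          exact wD_ub hq0 hm (by omega) t
    -- right robot walk bundle
    have hrobotR : ∃ wr : ℕ → ℕ,
        wr 0 = svR ∧
        (∀ t, wr (t+1) = wr t ∨ wr (t+1) = wr t + 1 ∨ wr t = wr (t+1) + 1) ∧
        (∀ t, 1 ≤ wr t ∧ wr t ≤ n) ∧
        (∀ t, (if q = m then svR else min (pos q) svR) ≤ wr t) ∧
        (∀ t, WR ≤ t → wr t = wr WR) ∧
        (∀ j, q ≤ j → j < m → ∃ st, st + δ ≤ WR ∧ ∀ u ≤ δ, wr (st + u) = pos j) ∧
        (0 < q → q < m → svR ≤ pos (q-1) → ∀ t, min (svR + t) (pos q) ≤ wr t) := by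
      rcases Nat.eq_or_lt_of_le hqm with rfl | hqm'
      · exact ⟨fun _ => svR, rfl, fun t => Or.inl rfl, fun t => ⟨by show 1 ≤ svR; omega, hsvb.2⟩,
          fun t => by simp, fun t _ => rfl, fun j h1 h2 => absurd h1 (by omega),
          fun _ h => absurd h (by omega)⟩
      have hm : ∀ ⦃i j : ℕ⦄, q ≤ i → i < j → j < m → pos i < pos j :=
        fun i j _ hij hj => hmono' hij hj
      have hpq : 1 ≤ pos q := (hposb q hqm').1
      have hpm1n : pos (m-1) ≤ n := (hposb (m-1) (by omega)).2
      have hWReq : WR = min (svR - min (pos q) svR) (max (pos (m-1)) svR - svR) +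
          (max (pos (m-1)) svR - min (pos q) svR) + (m - q) * δ := by
        rw [hWR, hopt_pos q m svR hqm']
      have hcm : δ * (m - q) = (m - q) * δ := Nat.mul_comm _ _
      rcases le_or_gt (svR - min (pos q) svR) (max (pos (m-1)) svR - svR) with hdir | hdir
      · -- up walk
        have htot : (svR - min (pos q) svR) + (max (pos (m-1)) svR - min (pos q) svR) +
            δ * (m - q) = WR := by
          rw [hWReq, hcm]
          omega
        refine ⟨wU pos δ q m svR, wU_zero hm, wU_step hm, ?_, ?_, ?_, ?_, ?_⟩
        · intro t
          have := wU_mem (δ := δ) (s := svR) hm t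
          constructor
          · have h1 : 1 ≤ min (pos q) svR := by have := hsvb.1; omega
            omega
          · have h2 : max (pos (m-1)) svR ≤ n := by have := hsvb; omega
            omega
        · intro t
          have := wU_mem (δ := δ) (s := svR) hm t
          rw [if_neg (by omega)]
          omega
        · intro t ht
          have h1 := wU_const (δ := δ) (s := svR) hm t (by omega)
          have h2 := wU_const (δ := δ) (s := svR) hm WR (by omega)
          rw [h1, h2]
        · intro j hj1 hj2
          obtain ⟨st, h1, h2⟩ := wU_task (s := svR) hm hj1 hj2
          exact ⟨st, by omega, h2⟩
        · intro h1 h2 h3 t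
          have h4 : pos (q-1) < pos q := hmono' (by omega) (by omega)
          have h5 : min (pos q) svR = svR := by omega
          exact wU_lb hqm' hm h5 t
      · -- down walk
        have htot : (max (pos (m-1)) svR - svR) + (max (pos (m-1)) svR - min (pos q) svR) +
            δ * (m - q) = WR := by
          rw [hWReq, hcm]
          omega
        have hpos1 : ∀ ⦃j : ℕ⦄, q ≤ j → j < m → 1 ≤ pos j :=
          fun j _ hj => (hposb j hj).1
        refine ⟨wD pos δ q m svR, wD_zero hm, wD_step hm, ?_, ?_, ?_, ?_, ?_⟩
        · intro t
          have := wD_mem (δ := δ) (s := svR) hm t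
          constructor
          · have h1 : 1 ≤ min (pos q) svR := by have := hsvb.1; omega
            omega
          · have h2 : max (pos (m-1)) svR ≤ n := by have := hsvb; omega
            omega
        · intro t
          have := wD_mem (δ := δ) (s := svR) hm t
          rw [if_neg (by omega)]
          omega
        · intro t ht
          have h1 := wD_const (δ := δ) (s := svR) hm t (by omega)
          have h2 := wD_const (δ := δ) (s := svR) hm WR (by omega)
          rw [h1, h2]
        · intro j hj1 hj2
          obtain ⟨st, h1, h2⟩ := wD_task (s := svR) hm hpos1 hj1 hj2
          exact ⟨st, by omega, h2⟩
        · intro h1 h2 h3 t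
          exfalso
          have h4 : pos (q-1) < pos q := hmono' (by omega) (by omega)
          omega
    obtain ⟨wl, hl0, hlstep, hlbnd, hlub, hlconst, hltask, hlinv⟩ := hrobotL
    obtain ⟨wr, hr0, hrstep, hrbnd, hrlb, hrconst, hrtask, hrinv⟩ := hrobotR
    -- the two robots never meet
    have hlt : ∀ t, wl t < wr t := by
      by_cases hsep : (if q = 0 then svL else max (pos (q-1)) svL) <
          (if q = m then svR else min (pos q) svR)
      · exact fun t => lt_of_le_of_lt (hlub t) (lt_of_lt_of_le hsep (hrlb t))
      · have h0q : 0 < q := by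
          rcases Nat.eq_zero_or_pos q with rfl | h
          · exfalso
            apply hsep
            rw [if_pos rfl]
            rcases Nat.eq_zero_or_pos m with rfl | hm
            · rw [if_pos rfl]; exact hsv
            · rw [if_neg (by omega)]
              have := hg0 rfl hm
              omega
          · exact h
        have hqm' : q < m := by
          rcases Nat.eq_or_lt_of_le hqm with rfl | h
          · exfalso
            apply hsep
            rw [if_pos rfl, if_neg (by omega)]
            have := hgm rfl (by omega)
            omega
          · exact h
        rw [if_neg (by omega), if_neg (by omega)] at hsep
        have hpp : pos (q-1) < pos q := hmono' (by omega) hqm'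
        have hcase : svR ≤ pos (q-1) ∨ pos q ≤ svL := by omega
        rcases hcase with hca | hcb
        · intro t
          have h1 := hlub t
          rw [if_neg (by omega)] at h1
          have h2 := hrinv h0q hqm' hca t
          have h3 := (speed_ub wl hlstep t).1
          rw [hl0] at h3
          omega
        · intro t
          have h1 := hlinv h0q hqm' hcb t
          have h2 := hrlb t
          rw [if_neg (by omega)] at h2
          have h3 := (speed_ub wr hrstep t).2
          rw [hr0] at h3
          have hp1 : 1 ≤ pos q := (hposb q hqm').1
          omega
    -- assemble the witness
    refine ⟨fun r => if r = 0 then wl else wr, fun _ => T, fun j => if j < q then 0 else 1,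
      ?_, ?_⟩
    · unfold PathValid
      refine ⟨?_, ?_, ?_, ?_, ?_, ?_, ?_⟩
      · intro r hr
        interval_cases r
        · simpa using hl0
        · simpa using hr0
      · intro r hr t
        interval_cases r
        · simpa using hlstep t
        · simpa using hrstep t
      · intro r hr t
        interval_cases r
        · simpa using hlbnd t
        · simpa using hrbnd t
      · intro r hr t ht
        interval_cases r
        · have h : wl t = wl T := by
            rw [hlconst t (le_trans hWLT ht), hlconst T hWLT]
          simpa using h
        · have h : wr t = wr T := by
            rw [hrconst t (le_trans hWRT ht), hrconst T hWRT]
          simpa using h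
      · intro t r hr r' hr' hne
        have h1 := hlt t
        have h2 := hlt (t+1)
        have hrr : (r = 0 ∧ r' = 1) ∨ (r = 1 ∧ r' = 0) := by omega
        rcases hrr with ⟨rfl, rfl⟩ | ⟨rfl, rfl⟩
        · constructor
          · simpa using Nat.ne_of_lt h1
          · rintro ⟨e1, e2⟩
            simp at e1 e2
            omega
        · constructor
          · simpa using (Nat.ne_of_lt h1).symm
          · rintro ⟨e1, e2⟩
            simp at e1 e2
            omega
      · intro j hj
        by_cases h : j < q <;> simp [h]
      · intro j hj
        by_cases hjq : j < q
        · obtain ⟨st, h1, h2⟩ := hltask j hjq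
          refine ⟨st, ?_, fun u hu => ?_⟩
          · simpa [hjq] using le_trans h1 hWLT
          · simpa [hjq] using h2 u hu
        · obtain ⟨st, h1, h2⟩ := hrtask j (by omega) hj
          refine ⟨st, ?_, fun u hu => ?_⟩
          · simpa [hjq] using le_trans h1 hWRT
          · simpa [hjq] using h2 u hu
    · exact Finset.sup_const (by exact ⟨0, by simp⟩) T
  · -- lower bound
    rintro T' ⟨w, L, f, ⟨hstart, hsteps, hbnd, hstop, hcol, hfk, htask⟩, hsup⟩
    have h00 : w 0 0 = svL := by simpa using hstart 0 (by omega)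
    have h10 : w 1 0 = svR := by simpa using hstart 1 (by omega)
    have hord : ∀ t, w 0 t < w 1 t :=
      ordered (w 0) (w 1) (by omega) (hsteps 0 (by omega)) (hsteps 1 (by omega))
        (fun t => hcol t 0 (by omega) 1 (by omega) (by omega))
    set S0 := (Finset.range m).filter (fun j => f j = 0) with hS0
    set S1 := (Finset.range m).filter (fun j => ¬ f j = 0) with hS1
    have hcards : S0.card + S1.card = m := by
      rw [hS0, hS1, Finset.card_filter_add_card_filter_not]
      exact Finset.card_range m
    set q := S0.card with hqdef
    have hq : q ≤ m := by
      have := Finset.card_filter_le (Finset.range m) (fun j => f j = 0)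
      simpa [hqdef, Finset.card_range] using this
    have hS0mem : ∀ j ∈ S0, j < m ∧ f j = 0 := by
      intro j hj
      simp only [hS0, Finset.mem_filter, Finset.mem_range] at hj
      exact hj
    have hS1mem : ∀ j ∈ S1, j < m ∧ f j = 1 := by
      intro j hj
      simp only [hS1, Finset.mem_filter, Finset.mem_range] at hj
      have := hfk j hj.1
      omega
    have hvisit : ∀ r, r < 2 → ∀ t, ∃ t', t' ≤ L r ∧ w r t' = w r t := by
      intro r hr t
      rcases le_total t (L r) with h | h
      · exact ⟨t, h, rfl⟩
      · exact ⟨L r, le_rfl, (hstop r hr t h).symm⟩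
    have htaskpos : ∀ j, j < m → ∃ t0, t0 ≤ L (f j) ∧ w (f j) t0 = pos j := by
      intro j hj
      obtain ⟨a, haL, hstat⟩ := htask j hj
      exact ⟨a, by omega, by simpa using hstat 0 (Nat.zero_le δ)⟩
    have hsup2 : (Finset.range 2).sup L = max (L 0) (L 1) := by
      rw [show (2:ℕ) = 1 + 1 from rfl, Finset.range_add_one, Finset.sup_insert,
        Finset.range_add_one, Finset.sup_insert, Finset.range_zero, Finset.sup_empty]
      simp
      omega
    -- (i) left robot bound
    have hleft : optTime pos (fun _ => δ) svL 0 q ≤ L 0 := by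
      rcases Nat.eq_zero_or_pos q with hq0 | hqpos
      · rw [hopt_zero 0 q svL (by omega)]
        omega
      have h0m : 0 < m := lt_of_lt_of_le hqpos hq
      obtain ⟨tA, htA, hwA⟩ : ∃ t, t ≤ L 0 ∧ w 0 t ≤ min (pos 0) svL := by
        rcases le_total svL (pos 0) with h | h
        · exact ⟨0, Nat.zero_le _, by omega⟩
        · have hf0 : f 0 = 0 ∨ f 0 = 1 := by have := hfk 0 h0m; omega
          rcases hf0 with hf0 | hf0
          · obtain ⟨t0, ht0L, ht0⟩ := htaskpos 0 h0m
            rw [hf0] at ht0L ht0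
            exact ⟨t0, ht0L, by omega⟩
          · obtain ⟨t0, _, ht0⟩ := htaskpos 0 h0m
            rw [hf0] at ht0
            have hlt := hord t0
            obtain ⟨t', ht', hw'⟩ := hvisit 0 (by omega) t0
            exact ⟨t', ht', by omega⟩
      obtain ⟨tB, htB, hwB⟩ : ∃ t, t ≤ L 0 ∧ max (pos (q-1)) svL ≤ w 0 t := by
        rcases le_total (pos (q-1)) svL with h | h
        · exact ⟨0, Nat.zero_le _, by omega⟩
        · have hcase : (q-1) ∈ S0 ∨ ∃ j ∈ S0, q ≤ j := by
            by_cases hmem : (q-1) ∈ S0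
            · exact Or.inl hmem
            · right
              by_contra hcon
              push_neg at hcon
              have hsub : S0 ⊆ Finset.range q := by
                intro j hj
                simp only [Finset.mem_range]
                have := hcon j hj
                omega
              have : S0 = Finset.range q :=
                Finset.eq_of_subset_of_card_le hsub (by rw [Finset.card_range])
              rw [this] at hmem
              simp only [Finset.mem_range] at hmem
              omega
          rcases hcase with hmem | ⟨j, hj, hqj⟩
          · obtain ⟨hjm, hjf⟩ := hS0mem _ hmem
            obtain ⟨t0, ht0L, ht0⟩ := htaskpos (q-1) hjm
            rw [hjf] at ht0L ht0
            exact ⟨t0, ht0L, by omega⟩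
          · obtain ⟨hjm, hjf⟩ := hS0mem _ hj
            obtain ⟨t0, ht0L, ht0⟩ := htaskpos j hjm
            rw [hjf] at ht0L ht0
            have : pos (q-1) < pos j := hmono' (by omega) hjm
            exact ⟨t0, ht0L, by omega⟩
      have hinj : ∀ i ∈ S0, ∀ j ∈ S0, pos i = pos j → i = j := by
        intro i hi j hj hij
        obtain ⟨him, _⟩ := hS0mem _ hi
        obtain ⟨hjm, _⟩ := hS0mem _ hj
        rcases lt_trichotomy i j with h | h | h
        · exact absurd (hmono' h hjm) (by omega)
        · exact h
        · exact absurd (hmono' h him) (by omega)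
      have htask0 : ∀ j ∈ S0, ∃ a, a + δ ≤ L 0 ∧ ∀ u ≤ δ, w 0 (a + u) = pos j := by
        intro j hj
        obtain ⟨hjm, hjf⟩ := hS0mem _ hj
        obtain ⟨a, h1, h2⟩ := htask j hjm
        rw [hjf] at h1 h2
        exact ⟨a, h1, h2⟩
      have hrb := robot_lb (w 0) (L 0) svL δ pos S0 h00 (hsteps 0 (by omega)) hinj htask0
        (min (pos 0) svL) (max (pos (q-1)) svL) tA tB (min_le_right _ _) (le_max_right _ _)
        htA htB hwA hwB
      rw [hopt_pos 0 q svL hqpos, Nat.sub_zero]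
      rw [← hqdef] at hrb
      omega
    -- (ii) right robot bound
    have hright : optTime pos (fun _ => δ) svR q m ≤ L 1 := by
      rcases Nat.eq_or_lt_of_le hq with hqm | hqm
      · rw [hopt_zero q m svR (by omega)]
        omega
      have hcard1 : S1.card = m - q := by omega
      obtain ⟨tA, htA, hwA⟩ : ∃ t, t ≤ L 1 ∧ w 1 t ≤ min (pos q) svR := by
        rcases le_total svR (pos q) with h | h
        · exact ⟨0, Nat.zero_le _, by omega⟩
        · have hcase : q ∈ S1 ∨ ∃ j ∈ S1, j < q := by
            by_cases hmem : q ∈ S1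
            · exact Or.inl hmem
            · right
              by_contra hcon
              push_neg at hcon
              have hsub : S1 ⊆ Finset.Ico (q+1) m := by
                intro j hj
                obtain ⟨hjm, hjf⟩ := hS1mem _ hj
                simp only [Finset.mem_Ico]
                have h2 := hcon j hj
                have h3 : j ≠ q := by rintro rfl; exact hmem hj
                omega
              have := Finset.card_le_card hsub
              rw [Nat.card_Ico] at this
              omega
          rcases hcase with hmem | ⟨j, hj, hqj⟩
          · obtain ⟨hjm, hjf⟩ := hS1mem _ hmem
            obtain ⟨t0, ht0L, ht0⟩ := htaskpos q hjm
            rw [hjf] at ht0L ht0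
            exact ⟨t0, ht0L, by omega⟩
          · obtain ⟨hjm, hjf⟩ := hS1mem _ hj
            obtain ⟨t0, ht0L, ht0⟩ := htaskpos j hjm
            rw [hjf] at ht0L ht0
            have : pos j < pos q := hmono' hqj (by omega)
            exact ⟨t0, ht0L, by omega⟩
      obtain ⟨tB, htB, hwB⟩ : ∃ t, t ≤ L 1 ∧ max (pos (m-1)) svR ≤ w 1 t := by
        rcases le_total (pos (m-1)) svR with h | h
        · exact ⟨0, Nat.zero_le _, by omega⟩
        · have hf0 : f (m-1) = 0 ∨ f (m-1) = 1 := by have := hfk (m-1) (by omega); omega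
          rcases hf0 with hf0 | hf0
          · obtain ⟨t0, _, ht0⟩ := htaskpos (m-1) (by omega)
            rw [hf0] at ht0
            have hlt := hord t0
            obtain ⟨t', ht', hw'⟩ := hvisit 1 (by omega) t0
            exact ⟨t', ht', by omega⟩
          · obtain ⟨t0, ht0L, ht0⟩ := htaskpos (m-1) (by omega)
            rw [hf0] at ht0L ht0
            exact ⟨t0, ht0L, by omega⟩
      have hinj : ∀ i ∈ S1, ∀ j ∈ S1, pos i = pos j → i = j := by
        intro i hi j hj hij
        obtain ⟨him, _⟩ := hS1mem _ hi
        obtain ⟨hjm, _⟩ := hS1mem _ hj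
        rcases lt_trichotomy i j with h | h | h
        · exact absurd (hmono' h hjm) (by omega)
        · exact h
        · exact absurd (hmono' h him) (by omega)
      have htask1 : ∀ j ∈ S1, ∃ a, a + δ ≤ L 1 ∧ ∀ u ≤ δ, w 1 (a + u) = pos j := by
        intro j hj
        obtain ⟨hjm, hjf⟩ := hS1mem _ hj
        obtain ⟨a, h1, h2⟩ := htask j hjm
        rw [hjf] at h1 h2
        exact ⟨a, h1, h2⟩
      have hrb := robot_lb (w 1) (L 1) svR δ pos S1 h10 (hsteps 1 (by omega)) hinj htask1
        (min (pos q) svR) (max (pos (m-1)) svR) tA tB (min_le_right _ _) (le_max_right _ _)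
        htA htB hwA hwB
      rw [hopt_pos q m svR hqm]
      rw [hcard1] at hrb
      omega
    have := hTle q hq
    rw [← hsup, hsup2]
    simp only [hV] at this
    omega
end MainProof
end

section
/- On a star graph with two robots starting at distinct leaves and all tasks located at other leaves with even durations, there exists a collision-free pair of schedules in which, after robot R_2 waits one initial timestep, robot R_1 occupies the center vertex only at odd timesteps and robot R_2 only at even timesteps, each robot sequentially visiting and completing its assigned tasks; the schedules have time spans Σ_{tasks assigned to R_1}(d_t + 2) and 1 + Σ_{tasks assigned to R_2}(d_t + 2) respectively. -/
namespace StarSched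

variable {m : ℕ}

/-- Schedule of one robot: start at `s`, then for each task in the list,
spend one step at the center, then `d j + 1` steps at the task leaf. -/
def sched (d : Fin m → ℕ) : List (Fin m) → Option (Fin m ⊕ Fin 2) → ℕ → Option (Fin m ⊕ Fin 2)
  | [], s, _ => s
  | j :: js, s, t =>
    if t = 0 then s
    else if t = 1 then none
    else if t ≤ d j + 2 then some (Sum.inl j)
    else sched d js (some (Sum.inl j)) (t - (d j + 2))

def len (d : Fin m → ℕ) : List (Fin m) → ℕ
  | [] => 0
  | j :: js => d j + 2 + len d js

lemma sched_zero (d : Fin m → ℕ) (js : List (Fin m)) (s : Option (Fin m ⊕ Fin 2)) :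
    sched d js s 0 = s := by cases js <;> simp [sched]

lemma sched_cons_one (d : Fin m → ℕ) (j : Fin m) (js : List (Fin m)) (s : Option (Fin m ⊕ Fin 2)) :
    sched d (j :: js) s 1 = none := by simp [sched]

lemma sched_cons_mid (d : Fin m → ℕ) (j : Fin m) (js : List (Fin m)) (s : Option (Fin m ⊕ Fin 2))
    (t : ℕ) (h1 : 2 ≤ t) (h2 : t ≤ d j + 2) :
    sched d (j :: js) s t = some (Sum.inl j) := by
  simp only [sched]
  rw [if_neg (by omega), if_neg (by omega), if_pos h2]

lemma sched_shift (d : Fin m → ℕ) (j : Fin m) (js : List (Fin m)) (s : Option (Fin m ⊕ Fin 2))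
    (t : ℕ) (h : d j + 2 ≤ t) :
    sched d (j :: js) s t = sched d js (some (Sum.inl j)) (t - (d j + 2)) := by
  rcases eq_or_lt_of_le h with h' | h'
  · rw [← h', Nat.sub_self, sched_zero, sched_cons_mid d j js s _ (by omega) (by omega)]
  · simp only [sched]
    rw [if_neg (by omega), if_neg (by omega), if_neg (by omega)]

lemma sched_step (d : Fin m → ℕ) : ∀ (js : List (Fin m)) (s : Option (Fin m ⊕ Fin 2)) (t : ℕ),
    sched d js s (t + 1) = sched d js s t ∨ sched d js s (t + 1) = none ∨ sched d js s t = none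
  | [], s, t => Or.inl rfl
  | j :: js, s, t => by
    rcases Nat.lt_or_ge t (d j + 2) with h | h
    · match t with
      | 0 => rw [sched_cons_one]; exact Or.inr (Or.inl rfl)
      | 1 => rw [sched_cons_one]; exact Or.inr (Or.inr rfl)
      | Nat.succ (Nat.succ t) =>
        rw [sched_cons_mid d j js s (t+2+1) (by omega) (by omega),
            sched_cons_mid d j js s (t+2) (by omega) (by omega)]
        exact Or.inl rfl
    · rw [sched_shift d j js s (t+1) (by omega), sched_shift d j js s t h,
        show t + 1 - (d j + 2) = (t - (d j + 2)) + 1 by omega]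
      exact sched_step d js (some (Sum.inl j)) (t - (d j + 2))

lemma sched_stable (d : Fin m → ℕ) : ∀ (js : List (Fin m)) (s : Option (Fin m ⊕ Fin 2)) (t : ℕ),
    len d js ≤ t → sched d js s t = sched d js s (len d js)
  | [], s, t, _ => rfl
  | j :: js, s, t, h => by
    have hlen : len d (j :: js) = d j + 2 + len d js := rfl
    rw [sched_shift d j js s t (by omega), sched_shift d j js s (len d (j :: js)) (by omega),
      show len d (j :: js) - (d j + 2) = len d js by omega]
    exact sched_stable d js _ _ (by omega)

lemma sched_none_odd (d : Fin m → ℕ) (he : ∀ j, 2 ∣ d j) :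
    ∀ (js : List (Fin m)) (v : Fin m ⊕ Fin 2) (t : ℕ),
      sched d js (some v) t = none → Odd t
  | [], v, t, h => by simp [sched] at h
  | j :: js, v, t, h => by
    rcases Nat.lt_or_ge t (d j + 2) with hlt | hge
    · match t, h with
      | 0, h => rw [sched_zero] at h; exact absurd h (by simp)
      | 1, h => exact ⟨0, rfl⟩
      | Nat.succ (Nat.succ t), h =>
        rw [sched_cons_mid d j js _ (t+2) (by omega) (by omega)] at h
        exact absurd h (by simp)
    · rw [sched_shift d j js _ t hge] at h
      have := sched_none_odd d he js (Sum.inl j) (t - (d j + 2)) h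
      obtain ⟨k, hk⟩ := he j
      rw [Nat.odd_iff] at this ⊢
      omega

lemma sched_range (d : Fin m → ℕ) : ∀ (js : List (Fin m)) (s : Option (Fin m ⊕ Fin 2)) (t : ℕ),
    sched d js s t = s ∨ sched d js s t = none ∨ ∃ j ∈ js, sched d js s t = some (Sum.inl j)
  | [], s, t => Or.inl rfl
  | j :: js, s, t => by
    rcases Nat.lt_or_ge t (d j + 2) with hlt | hge
    · match t with
      | 0 => rw [sched_zero]; exact Or.inl rfl
      | 1 => rw [sched_cons_one]; exact Or.inr (Or.inl rfl)
      | Nat.succ (Nat.succ t) =>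
        rw [sched_cons_mid d j js s (t+2) (by omega) (by omega)]
        exact Or.inr (Or.inr ⟨j, List.mem_cons_self, rfl⟩)
    · rw [sched_shift d j js s t hge]
      rcases sched_range d js (some (Sum.inl j)) (t - (d j + 2)) with h | h | ⟨j', hj', h⟩
      · exact Or.inr (Or.inr ⟨j, List.mem_cons_self, h⟩)
      · exact Or.inr (Or.inl h)
      · exact Or.inr (Or.inr ⟨j', List.mem_cons_of_mem j hj', h⟩)

lemma sched_task (d : Fin m → ℕ) : ∀ (js : List (Fin m)) (s : Option (Fin m ⊕ Fin 2)) (j : Fin m),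
    j ∈ js → ∃ a, 2 ≤ a ∧ a + d j ≤ len d js ∧
      ∀ u ≤ d j, sched d js s (a + u) = some (Sum.inl j)
  | [], s, j, h => absurd h List.not_mem_nil
  | j' :: js, s, j, h => by
    rcases List.mem_cons.mp h with rfl | hmem
    · refine ⟨2, le_refl 2, by simp [len]; omega, fun u hu => ?_⟩
      rw [sched_cons_mid d j js s (2 + u) (by omega) (by omega)]
    · obtain ⟨a, ha2, hale, ha⟩ := sched_task d js (some (Sum.inl j')) j hmem
      refine ⟨a + (d j' + 2), by omega, by simp [len]; omega, fun u hu => ?_⟩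
      rw [show a + (d j' + 2) + u = (a + u) + (d j' + 2) by omega,
        sched_shift d j' js s _ (by omega), Nat.add_sub_cancel]
      exact ha u hu

lemma len_eq_sum (d : Fin m → ℕ) : ∀ js : List (Fin m),
    len d js = (js.map (fun j => d j + 2)).sum
  | [] => rfl
  | j :: js => by simp [len, len_eq_sum d js]

lemma filter_map_sum (p : Fin m → Bool) (g : Fin m → ℕ) : ∀ l : List (Fin m),
    ((l.filter p).map g).sum = (l.map (fun j => if p j then g j else 0)).sum
  | [] => rfl
  | j :: l => by
    rcases hp : p j with _ | _ <;> simp [List.filter_cons, hp, filter_map_sum p g l]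

lemma finset_sum_eq (f : Fin m → Fin 2) (g : Fin m → ℕ) (r : Fin 2) :
    ∑ j ∈ Finset.univ.filter (fun j => f j = r), g j =
      (((List.finRange m).filter (fun j => f j = r)).map g).sum := by
  rw [Finset.sum_filter, Fin.sum_univ_def, filter_map_sum]
  congr 1
  apply List.map_congr_left
  intro j _
  by_cases h : f j = r <;> simp [h]

end StarSched


open StarSched

/-- on the star graph (center `none`, task leaves `some (inl j)`
with task `j` of even duration `d j ≥ 2`, robot leaves `some (inr r)`), for any
assignment `f` of tasks to the two robots, there is a collision-free pair of
schedules in which (after robot `1` waits one initial timestep) robot `0`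
occupies the center only at odd timesteps and robot `1` only at even ones, each
robot completing its assigned tasks, with time spans
`Σ_{f j = 0} (d j + 2)` and `1 + Σ_{f j = 1} (d j + 2)` respectively. -/
theorem star_parity_schedule (m : ℕ) (d : Fin m → ℕ)
    (hd2 : ∀ j, 2 ≤ d j) (heven : ∀ j, 2 ∣ d j) (f : Fin m → Fin 2) :
    ∃ (w : Fin 2 → ℕ → Option (Fin m ⊕ Fin 2)) (L : Fin 2 → ℕ),
      (∀ r, w r 0 = some (Sum.inr r)) ∧
      (∀ r t, w r (t + 1) = w r t ∨ w r (t + 1) = none ∨ w r t = none) ∧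
      (∀ r t, L r ≤ t → w r t = w r (L r)) ∧
      (∀ (t : ℕ) (r r' : Fin 2), r ≠ r' →
        w r t ≠ w r' t ∧
        ¬(w r (t + 1) = w r' t ∧ w r' (t + 1) = w r t ∧ w r t ≠ w r (t + 1))) ∧
      w 1 1 = some (Sum.inr 1) ∧
      (∀ t, w 0 t = none → Odd t) ∧
      (∀ t, w 1 t = none → Even t) ∧
      (∀ j : Fin m, ∃ a, a + d j ≤ L (f j) ∧
        ∀ u ≤ d j, w (f j) (a + u) = some (Sum.inl j)) ∧
      L 0 = ∑ j ∈ Finset.univ.filter (fun j => f j = 0), (d j + 2) ∧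
      L 1 = 1 + ∑ j ∈ Finset.univ.filter (fun j => f j = 1), (d j + 2) := by
  set tasks : Fin 2 → List (Fin m) := fun r => (List.finRange m).filter (fun j => f j = r)
    with htasks
  have hcases : ∀ r : Fin 2, r = 0 ∨ r = 1 := by decide
  have mem_tasks : ∀ (r : Fin 2) (j : Fin m), j ∈ tasks r → f j = r := by
    intro r j hj
    have := (List.mem_filter.mp hj).2
    simpa using this
  have par0 : ∀ t, sched d (tasks 0) (some (Sum.inr 0)) t = none → Odd t :=
    fun t h => sched_none_odd d heven _ _ t h
  have par1 : ∀ t, sched d (tasks 1) (some (Sum.inr 1)) (t - 1) = none → Even t := by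
    intro t h
    match t with
    | 0 => rw [Nat.zero_sub, sched_zero] at h; exact absurd h (by simp)
    | Nat.succ t =>
      have := sched_none_odd d heven _ _ t (by simpa using h)
      rw [Nat.odd_iff] at this; rw [Nat.even_iff]; omega
  have key : ∀ s s', sched d (tasks 0) (some (Sum.inr 0)) s
        = sched d (tasks 1) (some (Sum.inr 1)) s' →
      sched d (tasks 0) (some (Sum.inr 0)) s = none ∧
      sched d (tasks 1) (some (Sum.inr 1)) s' = none := by
    intro s s' h
    rcases sched_range d (tasks 0) _ s with h0 | h0 | ⟨j, hj, h0⟩ <;>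
      rcases sched_range d (tasks 1) _ s' with h1 | h1 | ⟨j', hj', h1⟩ <;>
      rw [h0, h1] at h <;> first
      | exact ⟨h0, h1⟩
      | (have e := mem_tasks 0 j hj
         have e' := mem_tasks 1 j' hj'
         have hjj : j = j' := by simpa using h
         rw [hjj, e'] at e
         exact absurd e (by decide))
      | simp_all
  refine ⟨fun r t => sched d (tasks r) (some (Sum.inr r)) (t - (r : ℕ)),
    fun r => (r : ℕ) + len d (tasks r), ?_, ?_, ?_, ?_, ?_, ?_, ?_, ?_, ?_, ?_⟩
  · intro r
    show sched d (tasks r) (some (Sum.inr r)) (0 - (r : ℕ)) = some (Sum.inr r)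
    rw [Nat.zero_sub, sched_zero]
  · intro r t
    rcases hcases r with rfl | rfl
    · simpa using sched_step d (tasks 0) (some (Sum.inr 0)) t
    · rcases t with _ | t
      · exact Or.inl rfl
      · exact sched_step d (tasks 1) (some (Sum.inr 1)) t
  · intro r t h
    rcases hcases r with rfl | rfl <;>
      simp only [Fin.val_zero, Fin.val_one, Nat.sub_zero, Nat.zero_add] at h ⊢
    · rw [sched_stable d (tasks 0) _ t h,
        sched_stable d (tasks 0) _ (len d (tasks 0)) (le_refl _)]
    · rw [sched_stable d (tasks 1) _ (t - 1) (by omega),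
        sched_stable d (tasks 1) _ (1 + len d (tasks 1) - 1) (by omega)]
  · intro t r r' hne
    rcases hcases r with rfl | rfl <;> rcases hcases r' with rfl | rfl
    · exact absurd rfl hne
    · simp only [Fin.val_zero, Fin.val_one, Nat.sub_zero, Nat.add_sub_cancel]
      constructor
      · intro he
        obtain ⟨h0, h1⟩ := key t (t - 1) he
        have o := par0 t h0
        have e := par1 t h1
        rw [Nat.odd_iff] at o; rw [Nat.even_iff] at e; omega
      · rintro ⟨hA, hB, -⟩
        obtain ⟨-, h1⟩ := key (t + 1) (t - 1) hA
        obtain ⟨h0, -⟩ := key t t hB.symm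
        have o := par0 t h0
        have e := par1 t h1
        rw [Nat.odd_iff] at o; rw [Nat.even_iff] at e; omega
    · simp only [Fin.val_zero, Fin.val_one, Nat.sub_zero, Nat.add_sub_cancel]
      constructor
      · intro he
        obtain ⟨h0, h1⟩ := key t (t - 1) he.symm
        have o := par0 t h0
        have e := par1 t h1
        rw [Nat.odd_iff] at o; rw [Nat.even_iff] at e; omega
      · rintro ⟨hA, hB, -⟩
        obtain ⟨h0, -⟩ := key t t hA.symm
        obtain ⟨-, h1⟩ := key (t + 1) (t - 1) hB
        have o := par0 t h0
        have e := par1 t h1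
        rw [Nat.odd_iff] at o; rw [Nat.even_iff] at e; omega
    · exact absurd rfl hne
  · show sched d (tasks 1) (some (Sum.inr 1)) (1 - 1) = some (Sum.inr 1)
    rw [Nat.sub_self, sched_zero]
  · intro t h
    exact par0 t (by simpa using h)
  · intro t h
    exact par1 t (by simpa using h)
  · intro j
    have hj : j ∈ tasks (f j) := List.mem_filter.mpr ⟨List.mem_finRange j, by simp⟩
    obtain ⟨a, ha2, hale, ha⟩ := sched_task d (tasks (f j)) (some (Sum.inr (f j))) j hj
    refine ⟨a + (f j : ℕ), ?_, fun u hu => ?_⟩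
    · show a + (f j : ℕ) + d j ≤ (f j : ℕ) + len d (tasks (f j))
      omega
    · show sched d (tasks (f j)) (some (Sum.inr (f j))) (a + (f j : ℕ) + u - (f j : ℕ))
        = some (Sum.inl j)
      rw [show a + (f j : ℕ) + u - (f j : ℕ) = a + u by omega]
      exact ha u hu
  · show ((0 : Fin 2) : ℕ) + len d (tasks 0) = _
    rw [finset_sum_eq f (fun j => d j + 2) 0, ← len_eq_sum]
    simp [htasks]
  · show ((1 : Fin 2) : ℕ) + len d (tasks 1) = _
    rw [finset_sum_eq f (fun j => d j + 2) 1, ← len_eq_sum]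
    simp [htasks]
end
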